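/- Let k be a field, let m ≥ 1 and r ≥ 1 be integers, and let ζ' ∈ kˣ be an element of multiplicative order rm. Let g be a finite-dimensional Lie algebra over k equipped with a (ℤ × ℤ/m)-bigrading (q(k,i))_{(k,i) ∈ ℤ × ℤ/m}, and let σ : g → g be the k-linear map whose restriction to q(k, i) is multiplication by ζ'^{r·i₀ − k} for any representative i₀ ∈ ℤ of i (this is well defined since ζ'^{rm} = 1, negative exponents being interpreted in kˣ). Then σ is a Lie algebra automorphism of g and its fixed-point set {x ∈ g : σ(x) = x} equals ⊕_{N ∈ ℤ} q(rN, N̄). (The computation proving 2.6(c), identifying a splitting of a spiral as the fixed-point subalgebra of a finite-order automorphism.) -/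

import Mathlib

open scoped DirectSum

/-- The computation proving 2.6(c): for a `(ℤ × ℤ/m)`-bigraded finite-dimensional Lie
algebra and `ζ'` a unit of multiplicative order `rm`, the linear map `σ` acting on
`q(c, i)` by `ζ'^{r·i₀ - c}` (for any representative `i₀` of `i`) is a Lie algebra
automorphism whose fixed-point set is `⊕_{N ∈ ℤ} q(rN, N̄)`. -/
theorem splitting_as_fixed_points_of_automorphism
    (k : Type*) [Field k]
    (m r : ℕ) (hm : 1 ≤ m) (hr : 1 ≤ r)
    (ζ' : kˣ) (hζ' : orderOf ζ' = r * m)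
    (L : Type*) [LieRing L] [LieAlgebra k L] [Module.Finite k L]
    (q : ℤ × ZMod m → Submodule k L)
    (hdecomp : DirectSum.IsInternal q)
    (hbracket : ∀ a b : ℤ × ZMod m, ∀ x ∈ q a, ∀ y ∈ q b, ⁅x, y⁆ ∈ q (a + b))
    (σ : L →ₗ[k] L)
    (hσ : ∀ (c i₀ : ℤ), ∀ x ∈ q (c, (i₀ : ZMod m)),
      σ x = ((ζ' ^ ((r : ℤ) * i₀ - c) : kˣ) : k) • x) :
    Function.Bijective σ ∧
    (∀ x y : L, σ ⁅x, y⁆ = ⁅σ x, σ y⁆) ∧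
    (∀ x : L, σ x = x ↔ x ∈ ⨆ N : ℤ, q ((r : ℤ) * N, (N : ZMod m))) := by
  classical
  haveI : NeZero m := ⟨by omega⟩
  -- the scalar by which σ acts on q a
  set F : ℤ × ZMod m → kˣ := fun a => ζ' ^ ((r : ℤ) * ((a.2.val : ℤ)) - a.1) with hF
  -- exponent well-defined modulo m
  have key : ∀ (c i₀ j₀ : ℤ), (i₀ : ZMod m) = (j₀ : ZMod m) →
      ζ' ^ ((r : ℤ) * i₀ - c) = ζ' ^ ((r : ℤ) * j₀ - c) := by
    intro c i₀ j₀ h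
    have hdvd : (m : ℤ) ∣ i₀ - j₀ := by
      rwa [← ZMod.intCast_zmod_eq_zero_iff_dvd, Int.cast_sub, sub_eq_zero]
    obtain ⟨t, ht⟩ := hdvd
    have h1 : ζ' ^ (((r : ℤ) * i₀ - c) - ((r : ℤ) * j₀ - c)) = 1 := by
      have he : ((r : ℤ) * i₀ - c) - ((r : ℤ) * j₀ - c) = ((r * m : ℕ) : ℤ) * t := by
        push_cast; linear_combination (r : ℤ) * ht
      rw [he, zpow_mul, zpow_natCast, ← hζ', pow_orderOf_eq_one, one_zpow]
    rw [zpow_sub] at h1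
    exact mul_inv_eq_one.mp h1
  have hval : ∀ i : ZMod m, (((i.val : ℤ) : ZMod m)) = i := by
    intro i
    push_cast
    rw [ZMod.natCast_val, ZMod.cast_id]
  -- σ acts by F a on q a
  have hσ' : ∀ a : ℤ × ZMod m, ∀ x ∈ q a, σ x = ((F a : kˣ) : k) • x := by
    rintro ⟨c, i⟩ x hx
    have : x ∈ q (c, (((i.val : ℤ) : ZMod m))) := by rw [hval]; exact hx
    exact hσ c (i.val : ℤ) x this
  -- F is multiplicative
  have hFmul : ∀ a b : ℤ × ZMod m, F (a + b) = F a * F b := by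
    rintro ⟨c, i⟩ ⟨c', i'⟩
    show ζ' ^ ((r : ℤ) * (((i + i').val : ℤ)) - (c + c')) = _
    have h2 : ζ' ^ ((r : ℤ) * (((i + i').val : ℤ)) - (c + c'))
        = ζ' ^ ((r : ℤ) * ((i.val : ℤ) + (i'.val : ℤ)) - (c + c')) := by
      apply key
      push_cast [hval]
      rfl
    rw [h2, ← zpow_add]
    congr 1
    ring
  -- the decomposition equivalence and projections
  let e : (⨁ a, q a) ≃ₗ[k] L := LinearEquiv.ofBijective (DirectSum.coeLinearMap q) hdecomp
  let π : (ℤ × ZMod m) → L → L := fun a x => ((e.symm x) a : L)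
  have hπ_mem : ∀ a x, π a x ∈ q a := fun a x => ((e.symm x) a).2
  have hπ_ne : ∀ {a b : ℤ × ZMod m} {x : L}, x ∈ q b → b ≠ a → π a x = 0 := by
    intro a b x hx hba
    have h := hdecomp.ofBijective_coeLinearMap_of_mem_ne hba hx
    simp only [π, e, h, ZeroMemClass.coe_zero]
  have hπ_same : ∀ {a : ℤ × ZMod m} {x : L}, x ∈ q a → π a x = x := by
    intro a x hx
    have h := hdecomp.ofBijective_coeLinearMap_of_mem hx
    simp only [π, e, h]
  have hπ_add : ∀ a x y, π a (x + y) = π a x + π a y := by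
    intro a x y
    simp only [π, map_add, DirectSum.add_apply, Submodule.coe_add]
  have hπ_smul : ∀ a (c : k) x, π a (c • x) = c • π a x := by
    intro a c x
    simp only [π, map_smul, DirectSum.smul_apply, SetLike.val_smul]
  have hπ_zero : ∀ a, π a (0 : L) = 0 := by
    intro a; simp only [π, map_zero, DirectSum.zero_apply, ZeroMemClass.coe_zero]
  have htop : ∀ x : L, x ∈ ⨆ a, q a := by
    intro x; rw [hdecomp.submodule_iSup_eq_top]; trivial
  -- every x is the sum of its projections
  have hsum : ∀ x : L, x = ∑ a ∈ (e.symm x).support, π a x := by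
    intro x
    have h1 : DirectSum.coeLinearMap q (e.symm x) = x := e.apply_symm_apply x
    conv_lhs => rw [← h1, ← DirectSum.sum_support_of (e.symm x)]
    rw [map_sum]
    exact Finset.sum_congr rfl fun a _ => DirectSum.coeLinearMap_of q a _
  -- π intertwines σ with F a
  have hπσ : ∀ a x, π a (σ x) = ((F a : kˣ) : k) • π a x := by
    intro a x
    refine Submodule.iSup_induction q (htop x) (motive := fun x => π a (σ x) = ((F a : kˣ) : k) • π a x)
      ?_ ?_ ?_
    · intro b y hy
      rw [hσ' b y hy, hπ_smul]
      by_cases hba : b = a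
      · subst hba; rfl
      · rw [hπ_ne hy hba, smul_zero, smul_zero]
    · simp only [map_zero, hπ_zero, smul_zero]
    · intro y z hy hz
      rw [map_add, hπ_add, hy, hz, hπ_add, smul_add]
  -- injectivity
  have hinj : Function.Injective σ := by
    rw [← LinearMap.ker_eq_bot, LinearMap.ker_eq_bot']
    intro x hx
    have hcomp : ∀ a, π a x = 0 := by
      intro a
      have h := hπσ a x
      rw [hx, hπ_zero] at h
      rcases smul_eq_zero.mp h.symm with h' | h'
      · exact absurd h' (Units.ne_zero _)
      · exact h'
    rw [hsum x]
    exact Finset.sum_eq_zero fun a _ => hcomp a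
  have hbij : Function.Bijective σ :=
    ⟨hinj, (LinearMap.injective_iff_surjective).mp hinj⟩
  refine ⟨hbij, ?_, ?_⟩
  · -- bracket compatibility
    intro x y
    refine Submodule.iSup_induction q (htop x)
      (motive := fun x => ∀ y : L, σ ⁅x, y⁆ = ⁅σ x, σ y⁆) ?_ ?_ ?_ y
    · intro a x hx
      intro y
      refine Submodule.iSup_induction q (htop y)
        (motive := fun y => σ ⁅x, y⁆ = ⁅σ x, σ y⁆) ?_ ?_ ?_
      · intro b y hy
        rw [hσ' a x hx, hσ' b y hy, hσ' (a + b) _ (hbracket a b x hx y hy),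
          smul_lie, lie_smul, smul_smul, hFmul, Units.val_mul]
      · simp
      · intro y z hy hz
        rw [lie_add, map_add, hy, hz, map_add, lie_add]
    · intro y; simp
    · intro x x' hx hx' y
      rw [add_lie, map_add, hx, hx', map_add, add_lie]
  · -- fixed points
    intro x
    constructor
    · intro hfix
      have hcomp : ∀ a, ((F a : kˣ) : k) • π a x = π a x := by
        intro a
        have h := hπσ a x
        rw [hfix] at h
        exact h.symm
      rw [hsum x]
      refine Submodule.sum_mem _ fun a _ => ?_
      by_cases hFa : ((F a : kˣ) : k) = 1
      · -- F a = 1 implies a = (rN, N̄)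
        have hdvd : ((r * m : ℕ) : ℤ) ∣ ((r : ℤ) * ((a.2.val : ℤ)) - a.1) := by
          rw [← hζ', orderOf_dvd_iff_zpow_eq_one]
          exact Units.val_eq_one.mp hFa
        obtain ⟨t, ht⟩ := hdvd
        set N : ℤ := (a.2.val : ℤ) - (m : ℤ) * t with hN
        have ha1 : a.1 = (r : ℤ) * N := by push_cast at ht ⊢; rw [hN]; linarith
        have ha2 : a.2 = ((N : ZMod m)) := by
          have hcast : ((N : ZMod m)) = (((a.2.val : ℤ) : ZMod m)) := by
            rw [hN]
            push_cast
            simp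
          rw [hcast, hval]
        have haa : a = ((r : ℤ) * N, (N : ZMod m)) := Prod.ext ha1 ha2
        refine Submodule.mem_iSup_of_mem N ?_
        rw [← haa]
        exact hπ_mem a x
      · -- F a ≠ 1 implies π a x = 0
        have h0 : (((F a : kˣ) : k) - 1) • π a x = 0 := by
          rw [sub_smul, one_smul, hcomp a, sub_self]
        rcases smul_eq_zero.mp h0 with h | h
        · exact absurd (sub_eq_zero.mp h) hFa
        · rw [h]; exact Submodule.zero_mem _
    · intro hx
      refine Submodule.iSup_induction _ hx (motive := fun x => σ x = x) ?_ ?_ ?_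
      · intro N y hy
        rw [hσ (r * N) N y hy]
        simp
      · simp
      · intro y z hy hz
        rw [map_add, hy, hz]
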